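/- (Corollary 2.11) Let c ∈ ℂ, let κ ∈ ℂ with κ ∉ {0, −1, −2, …}, and let M > 0. If f ∈ 𝒜 satisfies |B_κ^c f(z)/z − B_{κ+1}^c f(z)/z| < M/|κ| for all z ∈ 𝕌, then |B_{κ+1}^c f(z)/z − 1| < M for all z ∈ 𝕌, where each quotient B_μ^c f(z)/z is understood as its analytic extension to 𝕌 with value 1 at z = 0. -/

import Mathlib

open Complex Metric Set

noncomputable section

/-- The open unit disk 𝕌. -/
def unitDisk : Set ℂ := Metric.ball (0 : ℂ) 1

/-- The class 𝒜 of normalized analytic functions on 𝕌. -/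
def InA (f : ℂ → ℂ) : Prop :=
  DifferentiableOn ℂ f unitDisk ∧ f 0 = 0 ∧ deriv f 0 = 1

/-- ℋ_0 : analytic on 𝕌 with value 0 at the origin. -/
def InH0 (q : ℂ → ℂ) : Prop := DifferentiableOn ℂ q unitDisk ∧ q 0 = 0

/-- ℋ_1 : analytic on 𝕌 with value 1 at the origin. -/
def InH1 (q : ℂ → ℂ) : Prop := DifferentiableOn ℂ q unitDisk ∧ q 0 = 1

/-- Univalent (analytic and injective) on 𝕌. -/
def Univalent (h : ℂ → ℂ) : Prop :=
  DifferentiableOn ℂ h unitDisk ∧ Set.InjOn h unitDisk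

/-- The coefficient (−c)^n / (4^n (κ)_n n!). -/
def besselCoeff (c κ : ℂ) (n : ℕ) : ℂ :=
  (-c) ^ n / ((4 : ℂ) ^ n * (ascPochhammer ℂ n).eval κ * (n.factorial : ℂ))

/-- The n-th Taylor coefficient of f at 0. -/
def taylorCoeff (f : ℂ → ℂ) (n : ℕ) : ℂ := iteratedDeriv n f 0 / (n.factorial : ℂ)

/-- φ_{κ,c} : the normalized generalized Bessel function of the first kind. -/
def genBessel (κ c : ℂ) (z : ℂ) : ℂ := ∑' n : ℕ, besselCoeff c κ n * z ^ (n + 1)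

/-- The operator B_κ^c, the Hadamard product of φ_{κ,c} with f. -/
def besselOp (c κ : ℂ) (f : ℂ → ℂ) (z : ℂ) : ℂ :=
  ∑' n : ℕ, besselCoeff c κ n * taylorCoeff f (n + 1) * z ^ (n + 1)

/-- Subordination f ≺ F on the unit disk. -/
def Subordinate (f F : ℂ → ℂ) : Prop :=
  ∃ w : ℂ → ℂ, DifferentiableOn ℂ w unitDisk ∧ w 0 = 0 ∧
    Set.MapsTo w unitDisk unitDisk ∧ ∀ z ∈ unitDisk, f z = F (w z)

/-- E(q) : boundary points where q blows up. -/
def Eset (q : ℂ → ℂ) : Set ℂ :=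
  {ζ | ζ ∈ Metric.sphere (0 : ℂ) 1 ∧
    Filter.Tendsto q (nhdsWithin ζ unitDisk) (Bornology.cobounded ℂ)}

/-- The class 𝒬. -/
def InQ (q : ℂ → ℂ) : Prop :=
  AnalyticOnNhd ℂ q (Metric.closedBall (0 : ℂ) 1 \ Eset q) ∧
  Set.InjOn q (Metric.closedBall (0 : ℂ) 1 \ Eset q) ∧
  ∀ ζ ∈ Metric.sphere (0 : ℂ) 1 \ Eset q, deriv q ζ ≠ 0

def InQ0 (q : ℂ → ℂ) : Prop := InQ q ∧ q 0 = 0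

def InQ1 (q : ℂ → ℂ) : Prop := InQ q ∧ q 0 = 1

/-- The admissibility class Φ_H[Ω,q] (Definition 2.1), with parameter κ. -/
def PhiH (κ : ℂ) (Ω : Set ℂ) (q : ℂ → ℂ) (φ : ℂ → ℂ → ℂ → ℂ → ℂ) : Prop :=
  ∀ z ∈ unitDisk, ∀ ζ ∈ Metric.sphere (0 : ℂ) 1 \ Eset q, ∀ k : ℝ, 1 ≤ k →
    ∀ u v w : ℂ, u = q ζ →
      v = ((k : ℂ) * ζ * deriv q ζ + (κ - 1) * q ζ) / κ →
      ((κ * (κ - 1) * w - (κ - 2) * (κ - 1) * u) / (κ * v - (κ - 1) * u) -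
          (2 * κ - 3)).re ≥ k * (ζ * deriv (deriv q) ζ / deriv q ζ + 1).re →
      φ u v w z ∉ Ω

/-- The admissibility class Φ_{H,1}[Ω,q] (Definition 2.3), with parameter κ. -/
def PhiH1 (κ : ℂ) (Ω : Set ℂ) (q : ℂ → ℂ) (φ : ℂ → ℂ → ℂ → ℂ → ℂ) : Prop :=
  ∀ z ∈ unitDisk, ∀ ζ ∈ Metric.sphere (0 : ℂ) 1 \ Eset q, q ζ ≠ 0 → ∀ k : ℝ, 1 ≤ k →
    ∀ u v w : ℂ, u = q ζ →
      v = (1 / (κ - 1)) * ((k : ℂ) * ζ * deriv q ζ / q ζ + κ * q ζ - 1) →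
      ((κ - 1) * v * ((κ - 1) * (w - v) + 1 - w) / ((κ - 1) * v + 1 - κ * u) -
          (2 * κ * u - 1 - (κ - 1) * v)).re ≥
        k * (ζ * deriv (deriv q) ζ / deriv q ζ + 1).re →
      φ u v w z ∉ Ω

/-- The admissibility class Φ_{H,2}[Ω,q] (Definition 2.5), with parameter κ. -/
def PhiH2 (κ : ℂ) (Ω : Set ℂ) (q : ℂ → ℂ) (φ : ℂ → ℂ → ℂ → ℂ → ℂ) : Prop :=
  ∀ z ∈ unitDisk, ∀ ζ ∈ Metric.sphere (0 : ℂ) 1 \ Eset q, ∀ k : ℝ, 1 ≤ k →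
    ∀ u v w : ℂ, u = q ζ →
      v = ((k : ℂ) * ζ * deriv q ζ + κ * q ζ) / κ →
      ((κ - 1) * (w - u) / (v - u) + (1 - 2 * κ)).re ≥
        k * (ζ * deriv (deriv q) ζ / deriv q ζ + 1).re →
      φ u v w z ∉ Ω

/-- The admissibility class Φ_H[Ω,M] (Definition 2.2), with parameter κ. -/
def PhiHM (κ : ℂ) (Ω : Set ℂ) (M : ℝ) (φ : ℂ → ℂ → ℂ → ℂ → ℂ) : Prop :=
  ∀ z ∈ unitDisk, ∀ θ : ℝ, ∀ k : ℝ, 1 ≤ k → ∀ L : ℂ,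
    (L * Complex.exp (-(θ : ℂ) * Complex.I)).re ≥ (k - 1) * k * M →
    φ ((M : ℂ) * Complex.exp ((θ : ℂ) * Complex.I))
      (((k : ℂ) + κ - 1) / κ * (M : ℂ) * Complex.exp ((θ : ℂ) * Complex.I))
      ((L + (κ - 1) * (2 * (k : ℂ) + κ - 2) * (M : ℂ) * Complex.exp ((θ : ℂ) * Complex.I)) /
        (κ * (κ - 1))) z ∉ Ω

/-- The admissibility class Φ′_H[Ω,q] (Definition 3.1), with parameter κ. -/
def PhiH' (κ : ℂ) (Ω : Set ℂ) (q : ℂ → ℂ) (φ : ℂ → ℂ → ℂ → ℂ → ℂ) : Prop :=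
  ∀ z ∈ unitDisk, ∀ ς ∈ Metric.sphere (0 : ℂ) 1, ∀ m : ℝ, 1 ≤ m →
    ∀ u v w : ℂ, u = q z →
      v = (z * deriv q z + (m : ℂ) * (κ - 1) * q z) / ((m : ℂ) * κ) →
      ((κ * (κ - 1) * w - (κ - 2) * (κ - 1) * u) / (κ * v - (κ - 1) * u) -
          (2 * κ - 3)).re ≤ (1 / m) * (z * deriv (deriv q) z / deriv q z + 1).re →
      φ u v w ς ∈ Ω

/-- The quotient g/h extended analytically with value 1 at the origin. -/
def ratio (g h : ℂ → ℂ) (z : ℂ) : ℂ := if z = 0 then 1 else g z / h z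

/-- The quotient g(z)/z extended analytically with value 1 at the origin. -/
def divZ (g : ℂ → ℂ) (z : ℂ) : ℂ := if z = 0 then 1 else g z / z

/-- z ↦ φ(B_{κ+1}^c f(z), B_κ^c f(z), B_{κ−1}^c f(z); z). -/
def opPhi (c κ : ℂ) (φ : ℂ → ℂ → ℂ → ℂ → ℂ) (f : ℂ → ℂ) (z : ℂ) : ℂ :=
  φ (besselOp c (κ + 1) f z) (besselOp c κ f z) (besselOp c (κ - 1) f z) z


namespace Cor211
open Filter Polynomial


lemma poch_ne_zero {κ : ℂ} (hκ : ∀ n : ℕ, κ ≠ -(n : ℂ)) (n : ℕ) :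
    (ascPochhammer ℂ n).eval κ ≠ 0 := by
  induction n with
  | zero => simp [ascPochhammer_zero]
  | succ n ih =>
      rw [ascPochhammer_succ_eval]
      exact mul_ne_zero ih fun h => hκ n (by linear_combination h)

lemma hκ_succ {κ : ℂ} (hκ : ∀ n : ℕ, κ ≠ -(n : ℂ)) : ∀ n : ℕ, κ + 1 ≠ -(n : ℂ) := by
  intro n h
  exact hκ (n + 1) (by push_cast; linear_combination h)

lemma poch_rel (κ : ℂ) (n : ℕ) :
    (ascPochhammer ℂ n).eval κ * (κ + n) = κ * (ascPochhammer ℂ n).eval (κ + 1) := by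
  have h1 : (ascPochhammer ℂ (n+1)).eval κ = κ * (ascPochhammer ℂ n).eval (κ + 1) := by
    rw [ascPochhammer_succ_left]
    simp [Polynomial.eval_comp]
  rw [← h1, ascPochhammer_succ_eval]

lemma besselCoeff_rel {κ : ℂ} (hκ : ∀ n : ℕ, κ ≠ -(n : ℂ)) (c : ℂ) (n : ℕ) :
    κ * besselCoeff c κ n = (κ + n) * besselCoeff c (κ + 1) n := by
  have hP := poch_ne_zero hκ n
  have hQ := poch_ne_zero (hκ_succ hκ) n
  have h4 : ((4:ℂ)) ^ n ≠ 0 := pow_ne_zero _ (by norm_num)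
  have hfact : ((n.factorial : ℂ)) ≠ 0 := Nat.cast_ne_zero.2 n.factorial_ne_zero
  have hrel := poch_rel κ n
  unfold besselCoeff
  field_simp
  ring_nf
  ring_nf at hrel
  linear_combination (-1 * (-c)^n) * hrel

lemma key_ident {κ : ℂ} (hκ : ∀ n : ℕ, κ ≠ -(n : ℂ)) (c : ℂ) (n : ℕ) :
    κ * (besselCoeff c κ n - besselCoeff c (κ + 1) n) = n * besselCoeff c (κ + 1) n := by
  linear_combination besselCoeff_rel hκ c n

lemma besselCoeff_succ {κ : ℂ} (hκ : ∀ n : ℕ, κ ≠ -(n : ℂ)) (c : ℂ) (n : ℕ) :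
    besselCoeff c κ (n+1) = besselCoeff c κ n * (-c / (4 * (κ + n) * ((n:ℂ) + 1))) := by
  have hP := poch_ne_zero hκ n
  have h4 : ((4:ℂ)) ^ n ≠ 0 := pow_ne_zero _ (by norm_num)
  have hfact : ((n.factorial : ℂ)) ≠ 0 := Nat.cast_ne_zero.2 n.factorial_ne_zero
  have hκn : κ + n ≠ 0 := fun h => hκ n (by linear_combination h)
  have hn1 : ((n:ℂ) + 1) ≠ 0 := Nat.cast_add_one_ne_zero n
  unfold besselCoeff
  rw [ascPochhammer_succ_eval, pow_succ, pow_succ, Nat.factorial_succ]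
  push_cast
  field_simp

/-- Majorant for `‖besselCoeff c κ n‖`. -/
def maj (c κ : ℂ) : ℕ → ℝ
  | 0 => 1
  | n+1 => maj c κ n * ((‖c‖ + 1) / (4 * ‖κ + n‖ * (n + 1)))

lemma norm_kn_pos {κ : ℂ} (hκ : ∀ n : ℕ, κ ≠ -(n : ℂ)) (n : ℕ) : 0 < ‖κ + (n:ℂ)‖ := by
  rw [norm_pos_iff]
  exact fun h => hκ n (by linear_combination h)

lemma maj_pos {κ : ℂ} (hκ : ∀ n : ℕ, κ ≠ -(n : ℂ)) (c : ℂ) : ∀ n, 0 < maj c κ n := by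
  intro n
  induction n with
  | zero => norm_num [maj]
  | succ n ih =>
      have := norm_kn_pos hκ n
      have hc : (0:ℝ) < ‖c‖ + 1 := by positivity
      exact mul_pos ih (by positivity)

lemma besselCoeff_le_maj {κ : ℂ} (hκ : ∀ n : ℕ, κ ≠ -(n : ℂ)) (c : ℂ) :
    ∀ n, ‖besselCoeff c κ n‖ ≤ maj c κ n := by
  intro n
  induction n with
  | zero => simp [besselCoeff, maj, ascPochhammer_zero]
  | succ n ih =>
      rw [besselCoeff_succ hκ c n, maj]
      have hkn := norm_kn_pos hκ n
      have hn1 : ‖((n:ℂ) + 1)‖ = (n:ℝ) + 1 := by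
        rw [show ((n:ℂ) + 1) = ((n + 1 : ℕ) : ℂ) by push_cast; ring, Complex.norm_natCast]
        push_cast; ring
      have h1 : ‖-c / (4 * (κ + n) * ((n:ℂ) + 1))‖
          = ‖c‖ / (4 * ‖κ + (n:ℂ)‖ * ((n:ℝ) + 1)) := by
        rw [norm_div, norm_neg, norm_mul, norm_mul, hn1]
        norm_num
      rw [norm_mul, h1]
      have h2 : ‖c‖ / (4 * ‖κ + (n:ℂ)‖ * ((n:ℝ) + 1))
          ≤ (‖c‖ + 1) / (4 * ‖κ + (n:ℂ)‖ * ((n:ℝ) + 1)) := by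
        gcongr
        linarith
      exact mul_le_mul ih h2 (by positivity) ((maj_pos hκ c n).le)


lemma summable_nmaj {κ : ℂ} (hκ : ∀ n : ℕ, κ ≠ -(n : ℂ)) (c : ℂ) :
    Summable (fun n : ℕ => ((n:ℝ) + 1) * maj c κ n) := by
  apply summable_of_ratio_norm_eventually_le (r := 1/2) (by norm_num)
  have h1 : ∀ᶠ n : ℕ in atTop, ‖κ‖ + 1 ≤ (n:ℝ) :=
    tendsto_natCast_atTop_atTop.eventually_ge_atTop (‖κ‖ + 1)
  have h2 : ∀ᶠ n : ℕ in atTop, ‖c‖ ≤ (n:ℝ) :=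
    tendsto_natCast_atTop_atTop.eventually_ge_atTop ‖c‖
  filter_upwards [h1, h2] with n hn1 hn2
  have hmaj := maj_pos hκ c n
  have hkn := norm_kn_pos hκ n
  have hbig : 1 ≤ ‖κ + (n:ℂ)‖ := by
    have t := norm_add_le (κ + (n:ℂ)) (-κ)
    rw [norm_neg] at t
    rw [show κ + (n:ℂ) + -κ = ((n:ℕ):ℂ) by ring, Complex.norm_natCast] at t
    linarith
  rw [Real.norm_of_nonneg (mul_nonneg (by positivity) (maj_pos hκ c (n+1)).le),
    Real.norm_of_nonneg (mul_nonneg (by positivity) hmaj.le)]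
  have hstep : maj c κ (n+1) = maj c κ n * ((‖c‖ + 1) / (4 * ‖κ + (n:ℂ)‖ * ((n:ℝ) + 1))) := by
    simp [maj]
  rw [hstep]
  push_cast
  rw [show ((n:ℝ) + 1 + 1) * (maj c κ n * ((‖c‖ + 1) / (4 * ‖κ + (n:ℂ)‖ * ((n:ℝ) + 1))))
      = (((n:ℝ) + 2) * (maj c κ n * (‖c‖ + 1))) / (4 * ‖κ + (n:ℂ)‖ * ((n:ℝ) + 1)) by ring,
    div_le_iff₀ (by positivity)]
  have e1 : ((n:ℝ) + 2) * (‖c‖ + 1) ≤ 2 * ((n:ℝ) + 1)^2 := by nlinarith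
  nlinarith [mul_le_mul_of_nonneg_right e1 hmaj.le,
    mul_le_mul_of_nonneg_left hbig (by positivity : (0:ℝ) ≤ 2 * ((n:ℝ)+1)^2 * maj c κ n)]


lemma taylor_bound {f : ℂ → ℂ} (hf : DifferentiableOn ℂ f (ball (0:ℂ) 1))
    {r : ℝ} (h0 : 0 < r) (h1 : r < 1) :
    ∃ C, 0 < C ∧ ∀ n, ‖taylorCoeff f n‖ * r ^ n ≤ C := by
  set R : NNReal := ⟨(r + 1)/2, by positivity⟩ with hR
  have hRr : r < (R:ℝ) := by change r < (r + 1)/2; linarith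
  have hR1 : (R:ℝ) < 1 := by change (r + 1)/2 < 1; linarith
  have hR0 : 0 < R := by
    rw [← NNReal.coe_lt_coe]
    simp [hR]; linarith
  have hd : DifferentiableOn ℂ f (closedBall (0:ℂ) R) :=
    hf.mono (closedBall_subset_ball hR1)
  have hps := hd.hasFPowerSeriesOnBall hR0
  set p := cauchyPowerSeries f 0 R with hp
  set rn : NNReal := ⟨r, h0.le⟩ with hrn
  have hrad : (rn : ENNReal) < p.radius := by
    refine lt_of_lt_of_le ?_ hps.r_le
    rw [ENNReal.coe_lt_coe, ← NNReal.coe_lt_coe]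
    exact hRr
  obtain ⟨C, hC, hle⟩ := p.norm_mul_pow_le_of_lt_radius hrad
  refine ⟨C, hC, fun n => ?_⟩
  have hcoeff : taylorCoeff f n = p.coeff n := by
    have h2 := hps.factorial_smul (1:ℂ) n
    rw [← iteratedDeriv_eq_iteratedFDeriv] at h2
    have h3 : p n (fun _ ↦ (1:ℂ)) = p.coeff n := rfl
    rw [h3] at h2
    rw [taylorCoeff, ← h2, nsmul_eq_mul]
    exact mul_div_cancel_left₀ _ (Nat.cast_ne_zero.2 n.factorial_ne_zero)
  rw [hcoeff, ← p.norm_apply_eq_norm_coef]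
  have := hle n
  exact this

/-- Master summability estimate. -/
lemma summable_master {κ : ℂ} (hκ : ∀ n : ℕ, κ ≠ -(n : ℂ)) (c : ℂ) {f : ℂ → ℂ}
    (hf : DifferentiableOn ℂ f (ball (0:ℂ) 1)) {x : ℝ} (hx0 : 0 ≤ x) (hx1 : x < 1) :
    Summable (fun n : ℕ => ((n:ℝ) + 1) * ‖besselCoeff c κ n * taylorCoeff f (n+1)‖ * x ^ n) := by
  set r : ℝ := (x + 1)/2 with hr
  have h0 : 0 < r := by positivity
  have h1 : r < 1 := by rw [hr]; linarith
  have hxr : x ≤ r := by rw [hr]; linarith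
  obtain ⟨C, hC, hle⟩ := taylor_bound hf h0 h1
  refine Summable.of_nonneg_of_le (fun n => by positivity) (fun n => ?_)
    ((summable_nmaj hκ c).mul_left (C / r))
  · have hb := besselCoeff_le_maj hκ c n
    have ht : ‖taylorCoeff f (n+1)‖ ≤ C / r ^ (n+1) := by
      rw [le_div_iff₀ (by positivity)]
      exact hle (n+1)
    have hxn : x ^ n ≤ r ^ n := pow_le_pow_left₀ hx0 hxr n
    calc ((n:ℝ) + 1) * ‖besselCoeff c κ n * taylorCoeff f (n+1)‖ * x ^ n
        ≤ ((n:ℝ) + 1) * (maj c κ n * (C / r ^ (n+1))) * r ^ n := by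
          rw [norm_mul]
          have hmajn := (maj_pos hκ c n).le
          refine mul_le_mul (mul_le_mul_of_nonneg_left
            (mul_le_mul hb ht (norm_nonneg _) hmajn) (by positivity)) hxn
            (by positivity) (mul_nonneg (by positivity)
              (mul_nonneg hmajn (by positivity)))
      _ = (C / r) * (((n:ℝ) + 1) * maj c κ n) := by
          field_simp
          ring

end Cor211

/-- Corollary 2.11. -/
theorem corollary_2_11 (c κ : ℂ) (hκ : ∀ n : ℕ, κ ≠ -(n : ℂ))
    (M : ℝ) (hM : 0 < M) (f : ℂ → ℂ) (hf : InA f)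
    (h : ∀ z ∈ unitDisk,
      ‖divZ (besselOp c κ f) z - divZ (besselOp c (κ+1) f) z‖ < M / ‖κ‖) :
    ∀ z ∈ unitDisk, ‖divZ (besselOp c (κ+1) f) z - 1‖ < M := by
  obtain ⟨hfd, hf0, hf1⟩ := hf
  have hfd' : DifferentiableOn ℂ f (Metric.ball (0:ℂ) 1) := hfd
  have hκ0 : κ ≠ 0 := by simpa using hκ 0
  have hκ1 : ∀ n : ℕ, κ + 1 ≠ -(n : ℂ) := Cor211.hκ_succ hκ
  set A : ℕ → ℂ := fun n => besselCoeff c (κ + 1) n * taylorCoeff f (n + 1) with hA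
  set B : ℕ → ℂ := fun n => besselCoeff c κ n * taylorCoeff f (n + 1) with hB
  set H : ℂ → ℂ := fun z => ∑' n : ℕ, A n * z ^ n with hH
  set K : ℂ → ℂ := fun z => ∑' n : ℕ, B n * z ^ n with hK
  set G : ℂ → ℂ := fun z => ∑' n : ℕ, (n : ℂ) * A n * z ^ n with hG
  have masterA : ∀ {x : ℝ}, 0 ≤ x → x < 1 →
      Summable (fun n : ℕ => ((n:ℝ) + 1) * ‖A n‖ * x ^ n) :=
    fun hx0 hx1 => Cor211.summable_master hκ1 c hfd' hx0 hx1
  have masterB : ∀ {x : ℝ}, 0 ≤ x → x < 1 →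
      Summable (fun n : ℕ => ((n:ℝ) + 1) * ‖B n‖ * x ^ n) :=
    fun hx0 hx1 => Cor211.summable_master hκ c hfd' hx0 hx1
  have natnorm : ∀ n : ℕ, ‖((n:ℂ))‖ = (n:ℝ) := fun n => Complex.norm_natCast n
  have sumA : ∀ {z : ℂ}, ‖z‖ < 1 → Summable (fun n : ℕ => A n * z ^ n) := by
    intro z hz
    refine Summable.of_norm_bounded (masterA (norm_nonneg z) hz) (fun n => ?_)
    rw [norm_mul, norm_pow]
    have h1 : ‖A n‖ ≤ ((n:ℝ) + 1) * ‖A n‖ := by nlinarith [norm_nonneg (A n)]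
    exact mul_le_mul_of_nonneg_right h1 (by positivity)
  have sumB : ∀ {z : ℂ}, ‖z‖ < 1 → Summable (fun n : ℕ => B n * z ^ n) := by
    intro z hz
    refine Summable.of_norm_bounded (masterB (norm_nonneg z) hz) (fun n => ?_)
    rw [norm_mul, norm_pow]
    have h1 : ‖B n‖ ≤ ((n:ℝ) + 1) * ‖B n‖ := by nlinarith [norm_nonneg (B n)]
    exact mul_le_mul_of_nonneg_right h1 (by positivity)
  have A0 : A 0 = 1 := by
    have h1 : besselCoeff c (κ + 1) 0 = 1 := by
      simp [besselCoeff, ascPochhammer_zero]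
    have h2 : taylorCoeff f 1 = 1 := by
      simp [taylorCoeff, iteratedDeriv_one, hf1]
    simp [hA, h1, h2]
  have B0 : B 0 = 1 := by
    have h1 : besselCoeff c κ 0 = 1 := by
      simp [besselCoeff, ascPochhammer_zero]
    have h2 : taylorCoeff f 1 = 1 := by
      simp [taylorCoeff, iteratedDeriv_one, hf1]
    simp [hB, h1, h2]
  have H0 : H 0 = 1 := by
    show (∑' n : ℕ, A n * (0:ℂ) ^ n) = 1
    rw [tsum_eq_single 0 (fun n hn => by simp [zero_pow hn])]
    simp [A0]
  have G0 : G 0 = 0 := by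
    show (∑' n : ℕ, (n:ℂ) * A n * (0:ℂ) ^ n) = 0
    rw [tsum_eq_single 0 (fun n hn => by simp [zero_pow hn])]
    simp
  have keyAB : ∀ n : ℕ, κ * (B n - A n) = (n : ℂ) * A n := by
    intro n
    have hkey := Cor211.key_ident hκ c n
    simp only [hA, hB]
    linear_combination (taylorCoeff f (n + 1)) * hkey
  have opEq : ∀ (μ : ℂ) (z : ℂ),
      besselOp c μ f z = z * ∑' n : ℕ, (besselCoeff c μ n * taylorCoeff f (n + 1)) * z ^ n := by
    intro μ z
    rw [besselOp, ← tsum_mul_left]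
    exact tsum_congr fun n => by ring
  have divZA : ∀ z : ℂ, divZ (besselOp c (κ + 1) f) z = H z := by
    intro z
    by_cases hz : z = 0
    · subst hz; simp [divZ, H0]
    · simp only [divZ, if_neg hz]
      rw [opEq, mul_div_cancel_left₀ _ hz]
  have divZB : ∀ z : ℂ, divZ (besselOp c κ f) z = K z := by
    intro z
    by_cases hz : z = 0
    · subst hz
      simp only [divZ, if_pos rfl]
      refine Eq.symm ?_
      show (∑' n : ℕ, B n * (0:ℂ) ^ n) = 1
      rw [tsum_eq_single 0 (fun n hn => by simp [zero_pow hn])]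
      simp [B0]
    · simp only [divZ, if_neg hz]
      rw [opEq, mul_div_cancel_left₀ _ hz]
  have keyIII : ∀ z : ℂ, ‖z‖ < 1 → κ * (K z - H z) = G z := by
    intro z hz
    rw [hK, hH, hG, ← Summable.tsum_sub (sumB hz) (sumA hz), ← tsum_mul_left]
    refine tsum_congr fun n => ?_
    have := keyAB n
    calc κ * (B n * z ^ n - A n * z ^ n) = κ * (B n - A n) * z ^ n := by ring
      _ = (n : ℂ) * A n * z ^ n := by rw [this]
  have hGlt : ∀ z ∈ Metric.ball (0:ℂ) 1, ‖G z‖ < M := by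
    intro z hz
    have h1 := h z hz
    rw [divZB z, divZA z] at h1
    have h2 : G z = κ * (K z - H z) := (keyIII z (mem_ball_zero_iff.1 hz)).symm
    rw [h2, norm_mul]
    calc ‖κ‖ * ‖K z - H z‖ < ‖κ‖ * (M / ‖κ‖) :=
          mul_lt_mul_of_pos_left h1 (norm_pos_iff.2 hκ0)
      _ = M := by
        rw [mul_div_assoc']
        exact mul_div_cancel_left₀ M (norm_pos_iff.2 hκ0).ne'
  -- term-by-term differentiation
  have deriv_tsum : ∀ (D : ℕ → ℂ),
      (∀ {x : ℝ}, 0 ≤ x → x < 1 → Summable (fun n : ℕ => ((n:ℝ) + 1) * ‖D n‖ * x ^ n)) →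
      ∀ {r : ℝ}, 0 < r → r < 1 → ∀ z ∈ Metric.ball (0:ℂ) r,
      HasDerivAt (fun w => ∑' n : ℕ, D n * w ^ n)
        (∑' n : ℕ, D n * ((n : ℂ) * z ^ (n - 1))) z := by
    intro D hsum r hr0 hr1 z hz
    refine hasDerivAt_tsum_of_isPreconnected
      (u := fun n : ℕ => (((n:ℝ) + 1) * ‖D n‖ * r ^ n) / r)
      ((hsum hr0.le hr1).div_const r)
      isOpen_ball (convex_ball (0:ℂ) r).isPreconnected
      (fun n y _ => (hasDerivAt_pow n y).const_mul (D n))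
      (fun n y hy => ?_) (mem_ball_self hr0) ?_ hz
    · have hyr : ‖y‖ ≤ r := (mem_ball_zero_iff.1 hy).le
      rw [norm_mul, norm_mul, norm_pow, natnorm]
      match n with
      | 0 => simp; positivity
      | (m + 1) =>
          have e1 : (((m + 1 : ℕ):ℝ) + 1) * ‖D (m + 1)‖ * r ^ (m + 1) / r
              = (((m:ℝ) + 2) * ‖D (m + 1)‖) * r ^ m := by
            rw [pow_succ]
            field_simp
            push_cast; ring
          refine le_trans ?_ (le_of_eq e1.symm)
          simp only [Nat.add_sub_cancel]
          have e2 : ‖y‖ ^ m ≤ r ^ m := pow_le_pow_left₀ (norm_nonneg y) hyr m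
          have e3 : ((m + 1 : ℕ):ℝ) ≤ (m:ℝ) + 2 := by push_cast; linarith
          calc ‖D (m + 1)‖ * (((m + 1 : ℕ):ℝ) * ‖y‖ ^ m)
              ≤ ‖D (m + 1)‖ * (((m:ℝ) + 2) * r ^ m) := by
                apply mul_le_mul_of_nonneg_left _ (norm_nonneg _)
                exact mul_le_mul e3 e2 (by positivity) (by positivity)
            _ = (((m:ℝ) + 2) * ‖D (m + 1)‖) * r ^ m := by ring
    · refine summable_of_ne_finset_zero (s := {0}) fun n hn => ?_
      have hn0 : n ≠ 0 := by simpa using hn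
      simp [zero_pow hn0]
  have diffH : DifferentiableOn ℂ H (Metric.ball (0:ℂ) 1) := by
    intro z hz
    have hz1 : ‖z‖ < 1 := mem_ball_zero_iff.1 hz
    have hr0 : 0 < (‖z‖ + 1) / 2 := by positivity
    have hr1 : (‖z‖ + 1) / 2 < 1 := by linarith
    have := deriv_tsum A masterA hr0 hr1 z (mem_ball_zero_iff.2 (by linarith))
    exact this.differentiableAt.differentiableWithinAt
  have diffK : DifferentiableOn ℂ K (Metric.ball (0:ℂ) 1) := by
    intro z hz
    have hz1 : ‖z‖ < 1 := mem_ball_zero_iff.1 hz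
    have hr0 : 0 < (‖z‖ + 1) / 2 := by positivity
    have hr1 : (‖z‖ + 1) / 2 < 1 := by linarith
    have := deriv_tsum B masterB hr0 hr1 z (mem_ball_zero_iff.2 (by linarith))
    exact this.differentiableAt.differentiableWithinAt
  have diffG : DifferentiableOn ℂ G (Metric.ball (0:ℂ) 1) := by
    refine DifferentiableOn.congr ((differentiableOn_const κ).mul (diffK.sub diffH))
      (fun x hx => (keyIII x (mem_ball_zero_iff.1 hx)).symm)
  have hmap : Set.MapsTo G (Metric.ball (0:ℂ) 1) (Metric.ball (G 0) M) := by
    intro w hw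
    rw [G0]
    exact mem_ball_zero_iff.2 (hGlt w hw)
  have hGle : ∀ z ∈ Metric.ball (0:ℂ) 1, ‖G z‖ ≤ M * ‖z‖ := by
    intro z hz
    have := Complex.dist_le_div_mul_dist_of_mapsTo_ball diffG (hmap.mono_right ball_subset_closedBall) hz
    rw [G0, dist_zero_right, dist_zero_right, div_one] at this
    exact this
  have tsum0 : ∀ (D : ℕ → ℂ), (∑' n : ℕ, D n * ((n : ℂ) * (0:ℂ) ^ (n - 1))) = D 1 := by
    intro D
    rw [tsum_eq_single 1 ?_]
    · simp
    · intro n hn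
      match n with
      | 0 => simp
      | (m + 2) => simp [zero_pow]
  have hd2 : HasDerivAt G (A 1) 0 := by
    have hb := deriv_tsum B masterB (by norm_num : (0:ℝ) < 1/2) (by norm_num) 0
      (mem_ball_self (by norm_num))
    have ha := deriv_tsum A masterA (by norm_num : (0:ℝ) < 1/2) (by norm_num) 0
      (mem_ball_self (by norm_num))
    have h3 := (hb.sub ha).const_mul κ
    rw [tsum0 A, tsum0 B] at h3
    have h4 : κ * (B 1 - A 1) = A 1 := by
      have := keyAB 1
      simpa using this
    rw [h4] at h3
    refine h3.congr_of_eventuallyEq ?_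
    filter_upwards [Metric.ball_mem_nhds (0:ℂ) one_pos] with w hw
    exact (keyIII w (mem_ball_zero_iff.1 hw)).symm
  have hA1 : ‖A 1‖ ≤ M := by
    have hdslope := Complex.norm_dslope_le_div_of_mapsTo_ball diffG (hmap.mono_right ball_subset_closedBall)
      (mem_ball_self one_pos)
    rw [dslope_same, hd2.deriv, div_one] at hdslope
    exact hdslope
  have hφ : ∀ z ∈ Metric.ball (0:ℂ) 1,
      ‖∑' n : ℕ, A n * ((n : ℂ) * z ^ (n - 1))‖ ≤ M := by
    intro z hz
    by_cases hz0 : z = 0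
    · subst hz0; rw [tsum0 A]; exact hA1
    · have hzG : (∑' n : ℕ, A n * ((n : ℂ) * z ^ (n - 1))) * z = G z := by
        rw [hG, ← tsum_mul_right]
        refine tsum_congr fun n => ?_
        match n with
        | 0 => simp
        | (m + 1) =>
            simp only [Nat.add_sub_cancel]
            push_cast
            ring
      have hle := hGle z hz
      rw [← hzG, norm_mul] at hle
      have hz0' : 0 < ‖z‖ := norm_pos_iff.2 hz0
      have : ‖∑' n : ℕ, A n * ((n : ℂ) * z ^ (n - 1))‖ * ‖z‖ ≤ M * ‖z‖ := hle
      exact le_of_mul_le_mul_right this hz0'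
  intro z hz
  have hz1 : ‖z‖ < 1 := mem_ball_zero_iff.1 hz
  have hr0 : 0 < (‖z‖ + 1) / 2 := by positivity
  have hr1 : (‖z‖ + 1) / 2 < 1 := by linarith
  have hzr : ‖z‖ < (‖z‖ + 1) / 2 := by linarith
  have hmvt := Convex.norm_image_sub_le_of_norm_hasDerivWithin_le
    (f := H) (f' := fun y => ∑' n : ℕ, A n * ((n : ℂ) * y ^ (n - 1))) (C := M)
    (fun y hy => (deriv_tsum A masterA hr0 hr1 y hy).hasDerivWithinAt)
    (fun y hy => hφ y (Metric.ball_subset_ball hr1.le hy))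
    (convex_ball (0:ℂ) ((‖z‖ + 1) / 2)) (mem_ball_self hr0) (mem_ball_zero_iff.2 hzr)
  rw [H0, sub_zero] at hmvt
  rw [divZA z]
  calc ‖H z - 1‖ ≤ M * ‖z‖ := hmvt
    _ < M := by nlinarith

end
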